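/- Let n ≥ 3 be an integer, m ≥ 1 an integer with m ≤ n, α ∈ (0,1), and η ∈ (0, 1/(n-m+α) - 1/(n-m+1)). Set η₀ to be any real with η₀ ≥ η, and define for λ ∈ ℝⁿ: tr(λ) = Σᵢλᵢ, |λ|² = Σᵢλᵢ², W(λ) = (1/(n-m+α) - 1/(n-m+1) + η₀ - η)·tr(λ)² + 2(m-α), and |C(λ)|² = Σ_{i,j} (λⱼ - λᵢ)²(λᵢλⱼ + 1)². Then there exists γ > 0, depending only on n, m, α, η, η₀, such that for every λ ∈ ℝⁿ satisfying |λ|² - tr(λ)²/(n-m+1) - η·tr(λ)² ≥ 0 and |λ|² - tr(λ)²/(n-m+α) - 2(m-α) ≤ 0, one has γ·W(λ)³ ≤ |C(λ)|² + 1. -/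

import Mathlib

open Finset
set_option maxHeartbeats 800000


noncomputable def simF (n : ℕ) (μ : Fin n → ℝ) : ℝ :=
  ∑ i, ∑ j, (μ i * μ j * (μ i - μ j)) ^ 2

lemma simF_nonneg (n : ℕ) (μ : Fin n → ℝ) : 0 ≤ simF n μ :=
  Finset.sum_nonneg fun i _ => Finset.sum_nonneg fun j _ => sq_nonneg _

lemma simF_cont (n : ℕ) : Continuous (simF n) := by
  apply continuous_finset_sum _ fun i _ => ?_
  apply continuous_finset_sum _ fun j _ => ?_
  exact (((continuous_apply i).mul (continuous_apply j)).mul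
    ((continuous_apply i).sub (continuous_apply j))).pow 2

lemma simF_scale (n : ℕ) (lam : Fin n → ℝ) (t : ℝ) (ht : t ≠ 0) :
    simF n lam = t ^ 6 * simF n (fun i => lam i / t) := by
  unfold simF
  rw [Finset.mul_sum]
  refine Finset.sum_congr rfl fun i _ => ?_
  rw [Finset.mul_sum]
  refine Finset.sum_congr rfl fun j _ => ?_
  field_simp

lemma key_lower (n : ℕ) (lam : Fin n → ℝ) :
    simF n lam / 2 - 4 * n * (∑ i, (lam i) ^ 2)
      ≤ ∑ i, ∑ j, (lam j - lam i) ^ 2 * (lam i * lam j + 1) ^ 2 := by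
  have h1 : ∀ i j : Fin n,
      (lam i * lam j * (lam i - lam j)) ^ 2 / 2 - (2 * (lam i)^2 + 2 * (lam j)^2)
        ≤ (lam j - lam i) ^ 2 * (lam i * lam j + 1) ^ 2 := by
    intro i j
    nlinarith [sq_nonneg ((lam i - lam j) * (lam i * lam j + 2)),
      sq_nonneg (lam i + lam j), sq_nonneg (lam i - lam j)]
  have h2 : ∑ i : Fin n, ∑ j : Fin n, (2 * (lam i)^2 + 2 * (lam j)^2)
      = 4 * n * (∑ i, (lam i) ^ 2) := by
    simp only [Finset.sum_add_distrib, Finset.sum_const, Finset.card_univ, Fintype.card_fin,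
      nsmul_eq_mul, ← Finset.sum_mul, ← Finset.mul_sum]
    ring
  have hdiv : simF n lam / 2
      = ∑ i : Fin n, ∑ j : Fin n, (lam i * lam j * (lam i - lam j)) ^ 2 / 2 := by
    unfold simF; simp [Finset.sum_div]
  rw [hdiv, ← h2, ← Finset.sum_sub_distrib]
  simp only [← Finset.sum_sub_distrib]
  exact Finset.sum_le_sum fun i _ => Finset.sum_le_sum fun j _ => h1 i j

noncomputable def myδ (n m : ℕ) (α : ℝ) : ℝ :=
  if m < n then (1 / ((n : ℝ) - m) - 1 / ((n : ℝ) - m + α)) / 2 else 1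

lemma myδ_pos (n m : ℕ) (α : ℝ) (hα0 : 0 < α) : 0 < myδ n m α := by
  unfold myδ
  split_ifs with h
  · have h1 : (1 : ℝ) ≤ (n : ℝ) - m := by
      have := h
      have : (m : ℝ) + 1 ≤ n := by exact_mod_cast h
      linarith
    have h2 : (0:ℝ) < (n : ℝ) - m := by linarith
    have h3 : (0:ℝ) < (n : ℝ) - m + α := by linarith
    have := one_div_lt_one_div_of_lt h2 (by linarith : (n:ℝ) - m < (n:ℝ) - m + α)
    linarith
  · norm_num

lemma simF_pos (n m : ℕ) (α η : ℝ) (hmn : m ≤ n) (hα0 : 0 < α) (hη0 : 0 < η)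
    (μ : Fin n → ℝ) (hsum : ∑ i, μ i = 1)
    (hlo : 1 / ((n : ℝ) - m + 1) + η ≤ ∑ i, (μ i) ^ 2)
    (hhi : ∑ i, (μ i) ^ 2 ≤ 1 / ((n : ℝ) - m + α) + myδ n m α) :
    0 < simF n μ := by
  have hnm0 : (0:ℝ) ≤ (n : ℝ) - m := by
    have : (m:ℝ) ≤ n := by exact_mod_cast hmn
    linarith
  rcases lt_or_ge 0 (simF n μ) with h | h
  · exact h
  exfalso
  have hF0 : simF n μ = 0 :=
    le_antisymm h (Finset.sum_nonneg fun i _ => Finset.sum_nonneg fun j _ => sq_nonneg _)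
  have hzero : ∀ i j : Fin n, μ i * μ j * (μ i - μ j) = 0 := by
    intro i j
    have h1 := (Finset.sum_eq_zero_iff_of_nonneg
      (fun i _ => Finset.sum_nonneg fun j _ => sq_nonneg _)).mp hF0 i (Finset.mem_univ i)
    have h2 := (Finset.sum_eq_zero_iff_of_nonneg (fun j _ => sq_nonneg _)).mp h1 j
      (Finset.mem_univ j)
    exact pow_eq_zero_iff (by norm_num) |>.mp h2
  set s : Finset (Fin n) := Finset.univ.filter (fun i => μ i ≠ 0) with hs
  have hs1 : ∑ i ∈ s, μ i = 1 := by
    rw [hs, Finset.sum_filter_ne_zero]; exact hsum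
  have hs2 : ∑ i ∈ s, (μ i) ^ 2 = ∑ i, (μ i) ^ 2 := by
    apply Finset.sum_subset (Finset.filter_subset _ _)
    intro x _ hx
    simp only [hs, Finset.mem_filter, Finset.mem_univ, true_and, not_not] at hx
    simp [hx]
  have hsne : s.Nonempty := by
    rcases Finset.eq_empty_or_nonempty s with he | hne
    · rw [he] at hs1; simp at hs1
    · exact hne
  obtain ⟨i₀, hi₀⟩ := hsne
  have hb0 : μ i₀ ≠ 0 := (Finset.mem_filter.mp hi₀).2
  set b := μ i₀ with hbdef
  have heq : ∀ i ∈ s, μ i = b := by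
    intro i hi
    have hi0 : μ i ≠ 0 := (Finset.mem_filter.mp hi).2
    have := hzero i i₀
    rcases mul_eq_zero.mp this with h' | h'
    · rcases mul_eq_zero.mp h' with h'' | h''
      · exact absurd h'' hi0
      · exact absurd h'' hb0
    · linarith [sub_eq_zero.mp h']
  set k := s.card with hk
  have hkb : (k : ℝ) * b = 1 := by
    rw [← hs1, Finset.sum_congr rfl heq, Finset.sum_const, nsmul_eq_mul]
  have hkb2 : (k : ℝ) * b ^ 2 = ∑ i, (μ i) ^ 2 := by
    rw [← hs2, Finset.sum_congr rfl (fun i hi => by rw [heq i hi]), Finset.sum_const,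
      nsmul_eq_mul]
  -- b equals the squared norm
  have hbB : b = ∑ i, (μ i) ^ 2 := by
    have : (k:ℝ) * b ^ 2 = ((k:ℝ) * b) * b := by ring
    rw [this, hkb, one_mul] at hkb2
    exact hkb2
  have hden1 : (0:ℝ) < (n:ℝ) - m + 1 := by linarith
  have hbpos : 0 < b := by
    rw [hbB]
    have : (0:ℝ) < 1 / ((n:ℝ) - m + 1) := by positivity
    linarith
  have hkpos : (0:ℝ) < k := by
    rcases Nat.eq_zero_or_pos k with h0 | h0
    · rw [h0] at hkb; norm_num at hkb
    · exact_mod_cast h0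
  have hbk : b = 1 / (k:ℝ) := by field_simp at hkb ⊢; linarith [hkb]
  -- b > 1/(n-m+1)
  have hbgt : 1 / ((n:ℝ) - m + 1) < b := by rw [hbB]; linarith
  -- so k < n - m + 1
  have hklt : (k : ℝ) < (n:ℝ) - m + 1 := by
    have h' : 1 / ((n:ℝ) - m + 1) < 1 / (k:ℝ) := by rw [← hbk]; exact hbgt
    have := (div_lt_div_iff₀ hden1 hkpos).mp h'
    linarith
  have hkle : (k : ℝ) ≤ (n:ℝ) - m := by
    have hint : (k : ℤ) < (n:ℤ) - m + 1 := by
      have h' : ((k : ℤ) : ℝ) < (((n:ℤ) - m + 1 : ℤ) : ℝ) := by push_cast; linarith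
      exact_mod_cast h'
    have hint2 : (k : ℤ) ≤ (n:ℤ) - m := by omega
    have h'' : ((k : ℤ) : ℝ) ≤ (((n:ℤ) - m : ℤ) : ℝ) := by exact_mod_cast hint2
    push_cast at h''
    linarith
  have hk1 : (1:ℝ) ≤ k := by exact_mod_cast hkpos
  have hmn' : m < n := by
    have h' : ((m + 1 : ℕ) : ℝ) ≤ ((n : ℕ) : ℝ) := by push_cast; linarith
    have := Nat.cast_le.mp h'
    omega
  have hnmpos : (0:ℝ) < (n:ℝ) - m := by linarith
  rw [myδ, if_pos hmn'] at hhi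
  have h1 : 1 / ((n:ℝ) - m) ≤ b := by
    rw [hbk]
    rw [div_le_div_iff₀ hnmpos hkpos]
    linarith
  have h2 : 1 / ((n:ℝ) - m + α) < 1 / ((n:ℝ) - m) :=
    one_div_lt_one_div_of_lt hnmpos (by linarith)
  rw [← hbB] at hhi
  linarith

lemma simF_min (n m : ℕ) (α η : ℝ) (hmn : m ≤ n) (hα0 : 0 < α) (hη0 : 0 < η) :
    ∃ c : ℝ, 0 < c ∧ ∀ μ : Fin n → ℝ, ∑ i, μ i = 1 →
      1 / ((n : ℝ) - m + 1) + η ≤ ∑ i, (μ i) ^ 2 →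
      ∑ i, (μ i) ^ 2 ≤ 1 / ((n : ℝ) - m + α) + myδ n m α →
      c ≤ simF n μ := by
  set lo : ℝ := 1 / ((n : ℝ) - m + 1) + η with hlo
  set hi : ℝ := 1 / ((n : ℝ) - m + α) + myδ n m α with hhi
  set K : Set (Fin n → ℝ) :=
    {μ | (∑ i, μ i = 1) ∧ lo ≤ ∑ i, (μ i) ^ 2 ∧ ∑ i, (μ i) ^ 2 ≤ hi} with hK
  rcases Set.eq_empty_or_nonempty K with hKe | hKne
  · refine ⟨1, one_pos, fun μ h1 h2 h3 => ?_⟩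
    exact absurd (Set.eq_empty_iff_forall_notMem.mp hKe μ) (by exact fun h => h ⟨h1, h2, h3⟩)
  have hgcont : Continuous fun μ : Fin n → ℝ => ∑ i, μ i :=
    continuous_finset_sum _ fun i _ => continuous_apply i
  have hhcont : Continuous fun μ : Fin n → ℝ => ∑ i, (μ i) ^ 2 :=
    continuous_finset_sum _ fun i _ => (continuous_apply i).pow 2
  have hclosed : IsClosed K := by
    have h1 : IsClosed {μ : Fin n → ℝ | ∑ i, μ i = 1} := isClosed_eq hgcont continuous_const
    have h2 : IsClosed {μ : Fin n → ℝ | lo ≤ ∑ i, (μ i) ^ 2} :=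
      isClosed_le continuous_const hhcont
    have h3 : IsClosed {μ : Fin n → ℝ | ∑ i, (μ i) ^ 2 ≤ hi} :=
      isClosed_le hhcont continuous_const
    have : K = {μ : Fin n → ℝ | ∑ i, μ i = 1} ∩
        ({μ : Fin n → ℝ | lo ≤ ∑ i, (μ i) ^ 2} ∩ {μ : Fin n → ℝ | ∑ i, (μ i) ^ 2 ≤ hi}) := by
      ext μ; simp [hK, Set.mem_setOf_eq, and_assoc]
    rw [this]
    exact h1.inter (h2.inter h3)
  set r : ℝ := |hi| + 1 with hr
  have hr1 : 1 ≤ r := by have := abs_nonneg hi; linarith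
  have hsub : K ⊆ Set.univ.pi fun _ : Fin n => Set.Icc (-r) r := by
    intro μ hμ
    rw [Set.mem_univ_pi]
    intro i
    have hterm : (μ i) ^ 2 ≤ hi := by
      refine le_trans ?_ hμ.2.2
      exact Finset.single_le_sum (fun j _ => sq_nonneg (μ j)) (Finset.mem_univ i)
    have h2 : (μ i) ^ 2 ≤ r ^ 2 := by
      have : hi ≤ |hi| := le_abs_self hi
      nlinarith
    constructor
    · nlinarith [sq_nonneg (μ i + r)]
    · nlinarith [sq_nonneg (μ i - r)]
  have hKcomp : IsCompact K :=
    IsCompact.of_isClosed_subset (isCompact_univ_pi fun _ => isCompact_Icc) hclosed hsub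
  obtain ⟨μ₀, hμ₀K, hmin⟩ := hKcomp.exists_isMinOn hKne (simF_cont n).continuousOn
  refine ⟨simF n μ₀, simF_pos n m α η hmn hα0 hη0 μ₀ hμ₀K.1 hμ₀K.2.1 hμ₀K.2.2,
    fun μ h1 h2 h3 => hmin ⟨h1, h2, h3⟩⟩

private lemma aux_small (γ W W₀ Cs : ℝ) (hγ : γ ≤ 1 / W₀ ^ 3) (hγ0 : 0 ≤ γ)
    (hW0 : 0 ≤ W) (hWle : W ≤ W₀) (hW₀ : 0 < W₀) (hC : 0 ≤ Cs) :
    γ * W ^ 3 ≤ Cs + 1 := by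
  have h3 : W ^ 3 ≤ W₀ ^ 3 := pow_le_pow_left₀ hW0 hWle 3
  have h4 : γ * W ^ 3 ≤ (1 / W₀ ^ 3) * W₀ ^ 3 :=
    mul_le_mul hγ h3 (by positivity) (by positivity)
  have heq : (1 / W₀ ^ 3) * W₀ ^ 3 = 1 := by field_simp
  linarith

private lemma aux_large (c B cW Kc γ t2 Cs : ℝ)
    (hc : 0 < c) (hB : 0 < B) (hKc : 0 < Kc) (hcW : 0 < cW)
    (ht2 : 1 ≤ t2) (hTB : 4 * B / c ≤ t2)
    (hγ : γ ≤ (c / 4) / (cW + Kc) ^ 3) (hγ0 : 0 ≤ γ)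
    (hCs : c / 2 * t2 ^ 3 - B * t2 ^ 2 ≤ Cs) :
    γ * (cW * t2 + Kc) ^ 3 ≤ Cs + 1 := by
  have ht2pos : (0:ℝ) < t2 := by linarith
  have hWnn : 0 ≤ cW * t2 + Kc := by nlinarith
  have hWle : cW * t2 + Kc ≤ (cW + Kc) * t2 := by nlinarith
  have h3 : (cW * t2 + Kc) ^ 3 ≤ ((cW + Kc) * t2) ^ 3 := pow_le_pow_left₀ hWnn hWle 3
  have hγW : γ * (cW * t2 + Kc) ^ 3 ≤ (c / 4) / (cW + Kc) ^ 3 * ((cW + Kc) * t2) ^ 3 :=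
    mul_le_mul hγ h3 (by positivity) (by positivity)
  have hne : cW + Kc ≠ 0 := by positivity
  have heq : (c / 4) / (cW + Kc) ^ 3 * ((cW + Kc) * t2) ^ 3 = (c / 4) * t2 ^ 3 := by
    field_simp
  have h1 : 4 * B ≤ c * t2 := by
    rw [div_le_iff₀ hc] at hTB
    linarith
  have hBt : B * t2 ^ 2 ≤ (c / 4) * t2 ^ 3 := by
    nlinarith [mul_le_mul_of_nonneg_left h1 (sq_nonneg t2)]
  linarith

private lemma aux_4nS (nr a₂ Kc S t2 : ℝ) (hn : 0 ≤ nr) (ha : 0 < a₂) (hK : 0 < Kc)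
    (hS : S ≤ a₂ * t2 + Kc) (ht2 : 1 ≤ t2) :
    4 * nr * S ≤ (4 * nr * (a₂ + Kc)) * t2 ^ 2 := by
  nlinarith [mul_nonneg hn ha.le, mul_nonneg hn hK.le, sq_nonneg t2,
    mul_nonneg (mul_nonneg hn hK.le) (sq_nonneg (t2 - 1))]

open Finset in
theorem stmt7 (n m : ℕ) (α η η₀ : ℝ) (hn : 3 ≤ n) (hm : 1 ≤ m) (hmn : m ≤ n)
    (hα0 : 0 < α) (hα1 : α < 1)
    (hη0 : 0 < η)
    (hη1 : η < 1 / ((n : ℝ) - m + α) - 1 / ((n : ℝ) - m + 1))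
    (hηη₀ : η ≤ η₀) :
    ∃ γ : ℝ, 0 < γ ∧ ∀ lam : Fin n → ℝ,
      (∑ i, (lam i) ^ 2) - (∑ i, lam i) ^ 2 / ((n : ℝ) - m + 1)
          - η * (∑ i, lam i) ^ 2 ≥ 0 →
      (∑ i, (lam i) ^ 2) - (∑ i, lam i) ^ 2 / ((n : ℝ) - m + α)
          - 2 * ((m : ℝ) - α) ≤ 0 →
      γ * ((1 / ((n : ℝ) - m + α) - 1 / ((n : ℝ) - m + 1) + η₀ - η)
              * (∑ i, lam i) ^ 2 + 2 * ((m : ℝ) - α)) ^ 3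
        ≤ (∑ i, ∑ j, (lam j - lam i) ^ 2 * (lam i * lam j + 1) ^ 2) + 1 := by
  have hnm0 : (0:ℝ) ≤ (n:ℝ) - m := by
    have h' : (m:ℝ) ≤ n := by exact_mod_cast hmn
    linarith only [h']
  have hm1 : (1:ℝ) ≤ m := by exact_mod_cast hm
  have hnr : (0:ℝ) < n := by
    have : (3:ℝ) ≤ n := by exact_mod_cast hn
    linarith only [this]
  set a₁ : ℝ := 1 / ((n : ℝ) - m + 1) with ha₁
  set a₂ : ℝ := 1 / ((n : ℝ) - m + α) with ha₂
  set Kc : ℝ := 2 * ((m : ℝ) - α) with hKcdef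
  set cW : ℝ := a₂ - a₁ + η₀ - η with hcW
  have hKc : 0 < Kc := by rw [hKcdef]; linarith only [hm1, hα1]
  have hcWpos : 0 < cW := by rw [hcW]; linarith only [hη1, hηη₀, hη0]
  have hden2 : (0:ℝ) < (n:ℝ) - m + α := by linarith only [hnm0, hα0]
  have hden1 : (0:ℝ) < (n:ℝ) - m + 1 := by linarith only [hnm0]
  have ha₂pos : 0 < a₂ := by rw [ha₂]; positivity
  set δ : ℝ := myδ n m α with hδdef
  have hδ : 0 < δ := myδ_pos n m α hα0
  obtain ⟨c, hc, hcmin⟩ := simF_min n m α η hmn hα0 hη0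
  set B : ℝ := 4 * n * (a₂ + Kc) with hB
  have hBpos : 0 < B := by
    rw [hB]
    exact mul_pos (mul_pos (by norm_num) hnr) (by linarith only [ha₂pos, hKc])
  set T : ℝ := max (max 1 (Kc / δ)) (4 * B / c) with hT
  have hT1 : 1 ≤ T := le_trans (le_max_left 1 (Kc/δ)) (le_max_left _ _)
  have hTKδ : Kc / δ ≤ T := le_trans (le_max_right 1 (Kc/δ)) (le_max_left _ _)
  have hTB : 4 * B / c ≤ T := le_max_right _ _
  set W₀ : ℝ := cW * T + Kc with hW₀
  have hW₀pos : 0 < W₀ := by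
    rw [hW₀]
    have h' := mul_pos hcWpos (lt_of_lt_of_le one_pos hT1)
    linarith only [h', hKc]
  set γ₂ : ℝ := (c / 4) / (cW + Kc) ^ 3 with hγ₂
  have hγ₂pos : 0 < γ₂ := by rw [hγ₂]; positivity
  refine ⟨min (1 / W₀ ^ 3) γ₂, lt_min (by positivity) hγ₂pos, fun lam h₁ h₂ => ?_⟩
  set t : ℝ := ∑ i, lam i with htdef
  set S : ℝ := ∑ i, (lam i) ^ 2 with hSdef
  set Csum : ℝ := ∑ i, ∑ j, (lam j - lam i) ^ 2 * (lam i * lam j + 1) ^ 2 with hCsumdef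
  have hCnn : 0 ≤ Csum := by
    rw [hCsumdef]
    exact Finset.sum_nonneg fun i _ => Finset.sum_nonneg fun j _ =>
      mul_nonneg (sq_nonneg _) (sq_nonneg _)
  have hγmin0 : (0:ℝ) ≤ min (1 / W₀ ^ 3) γ₂ := le_of_lt (lt_min (by positivity) hγ₂pos)
  have hdiv1 : t ^ 2 / ((n:ℝ) - m + 1) = a₁ * t ^ 2 := by rw [ha₁]; ring
  have hdiv2 : t ^ 2 / ((n:ℝ) - m + α) = a₂ * t ^ 2 := by rw [ha₂]; ring
  have hS1 : (a₁ + η) * t ^ 2 ≤ S := by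
    have hexp : (a₁ + η) * t ^ 2 = a₁ * t ^ 2 + η * t ^ 2 := by ring
    linarith only [h₁, hdiv1, hexp]
  have hS2 : S ≤ a₂ * t ^ 2 + Kc := by
    linarith only [h₂, hdiv2]
  have hWnn : 0 ≤ cW * t ^ 2 + Kc := by positivity
  rcases le_or_gt (t ^ 2) T with hcase | hcase
  · -- small t
    have hWle : cW * t ^ 2 + Kc ≤ W₀ := by
      rw [hW₀]
      have h' := mul_le_mul_of_nonneg_left hcase hcWpos.le
      linarith only [h']
    exact aux_small _ _ _ _ (min_le_left _ _) hγmin0 hWnn hWle hW₀pos hCnn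
  · -- large t
    have ht2ge1 : 1 ≤ t ^ 2 := le_trans hT1 hcase.le
    have ht2pos : (0:ℝ) < t ^ 2 := lt_of_lt_of_le one_pos ht2ge1
    have htne : t ≠ 0 := by
      intro h0
      rw [h0] at ht2pos
      norm_num at ht2pos
    set μ : Fin n → ℝ := fun i => lam i / t with hμ
    have hμsum : ∑ i, μ i = 1 := by
      rw [hμ, ← Finset.sum_div, ← htdef, div_self htne]
    have hμsq : ∑ i, (μ i) ^ 2 = S / t ^ 2 := by
      rw [hμ, hSdef, Finset.sum_div]
      exact Finset.sum_congr rfl fun i _ => by simp [div_pow]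
    have hμlo : a₁ + η ≤ ∑ i, (μ i) ^ 2 := by
      rw [hμsq, le_div_iff₀ ht2pos]
      exact hS1
    have hμhi : ∑ i, (μ i) ^ 2 ≤ a₂ + δ := by
      rw [hμsq, div_le_iff₀ ht2pos]
      have h' : Kc / δ ≤ t ^ 2 := le_trans hTKδ hcase.le
      rw [div_le_iff₀ hδ] at h'
      have hexp : (a₂ + δ) * t ^ 2 = a₂ * t ^ 2 + δ * t ^ 2 := by ring
      have hcm : t ^ 2 * δ = δ * t ^ 2 := by ring
      linarith only [hS2, h', hexp, hcm]
    have hcμ : c ≤ simF n μ := hcmin μ hμsum hμlo hμhi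
    have hscale : simF n lam = t ^ 6 * simF n μ := simF_scale n lam t htne
    have hsimF : c * (t ^ 2) ^ 3 ≤ simF n lam := by
      rw [hscale]
      have h' := mul_le_mul_of_nonneg_left hcμ (by positivity : (0:ℝ) ≤ t ^ 6)
      have heq6 : c * (t ^ 2) ^ 3 = t ^ 6 * c := by ring
      linarith only [h', heq6]
    have hkey := key_lower n lam
    rw [← hSdef, ← hCsumdef] at hkey
    have h4nS : 4 * (n:ℝ) * S ≤ B * (t ^ 2) ^ 2 := by
      have h' := aux_4nS (n:ℝ) a₂ Kc S (t ^ 2) hnr.le ha₂pos hKc hS2 ht2ge1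
      rw [hB]
      linarith only [h']
    have hCs : c / 2 * (t ^ 2) ^ 3 - B * (t ^ 2) ^ 2 ≤ Csum := by
      linarith only [hkey, hsimF, h4nS]
    exact aux_large c B cW Kc _ (t ^ 2) Csum hc hBpos hKc hcWpos ht2ge1
      (le_trans hTB hcase.le) (min_le_right _ _) hγmin0 hCs
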